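/- In a 1-token game G_1(A) on a quantitative automaton A, if Eve plays a winning strategy, then against every copycat strategy of Adam she never makes a non-cautious move; consequently a winning strategy for Eve in G_1(A) induces a cautious strategy for Eve in the letter game on A. -/

import Mathlib

/-- A (total) nondeterministic quantitative automaton with alphabet `α`,
states `Q` and weights `W`. -/
structure QAut (α Q W : Type) where
  init : Q
  trans : Set (Q × α × W × Q)
  total : ∀ q a, ∃ x q', (q, a, x, q') ∈ trans

namespace QAut

variable {α Q W : Type} (A : QAut α Q W)

/-- The state reached after `n` transitions of `τ`, starting from `q`. -/
def stateAt (q : Q) (τ : ℕ → W × Q) : ℕ → Q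
  | 0 => q
  | n + 1 => (τ n).2

/-- `τ` is a legal infinite run of `A` from `q` over word `w`. -/
def RunFrom (q : Q) (w : ℕ → α) (τ : ℕ → W × Q) : Prop :=
  ∀ n, (stateAt q τ n, w n, (τ n).1, (τ n).2) ∈ A.trans

/-- `τ` is a legal infinite run of `A` (from the initial state) over word `w`. -/
def RunOn (w : ℕ → α) (τ : ℕ → W × Q) : Prop := A.RunFrom A.init w τ

/-- The value of automaton `A` on word `w`: the supremum of the values of all runs. -/
noncomputable def wordVal (Val : (ℕ → W) → ℝ) (w : ℕ → α) : ℝ :=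
  sSup { v | ∃ τ, A.RunOn w τ ∧ v = Val (fun n => (τ n).1) }

/-- A round of the `k`-token game: the letter played by Adam, Eve's transition,
and Adam's `k` transitions. -/
abbrev GkRound (α Q W : Type) (k : ℕ) := α × (W × Q) × (Fin k → W × Q)

/-- A strategy of Eve in the `k`-token game: given the history of rounds so far
and the current letter, pick a transition. -/
abbrev GkStrat (α Q W : Type) (k : ℕ) := List (GkRound α Q W k) → α → W × Q

/-- A play of the `k`-token game is consistent with Eve's strategy `s`. -/
def GkConsistent {k : ℕ} (s : GkStrat α Q W k) (π : ℕ → GkRound α Q W k) : Prop :=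
  ∀ n, (π n).2.1 = s ((List.range n).map π) (π n).1

/-- Eve's strategy `s` is winning in the `k`-token game with winning condition `good`
(comparing Eve's weight sequence with Adam's `k` weight sequences): on every
consistent play in which Adam's `k` tokens trace legal runs, Eve's token traces
a legal run and the condition `good` holds. -/
def GkWinning (k : ℕ) (good : (ℕ → W) → (Fin k → ℕ → W) → Prop)
    (s : GkStrat α Q W k) : Prop :=
  ∀ π : ℕ → GkRound α Q W k, GkConsistent s π →
    (∀ j, A.RunOn (fun n => (π n).1) (fun n => (π n).2.2 j)) →
    A.RunOn (fun n => (π n).1) (fun n => (π n).2.1) ∧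
      good (fun n => ((π n).2.1).1) (fun j n => ((π n).2.2 j).1)

/-- Eve wins the `k`-token game `G_k(A)` with winning condition `good`. -/
def EveWinsGk (k : ℕ) (good : (ℕ → W) → (Fin k → ℕ → W) → Prop) : Prop :=
  ∃ s, A.GkWinning k good s

/-- The value-comparison winning condition of token games for value function `Val`:
Eve's run's value is at least the maximum of the values of Adam's runs. -/
def goodVal (Val : (ℕ → W) → ℝ) {k : ℕ} (ve : ℕ → W) (va : Fin k → ℕ → W) : Prop :=
  ∀ j, Val (va j) ≤ Val ve

/-- A round of the letter game: the letter played by Adam and Eve's transition. -/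
abbrev LRound (α Q W : Type) := α × (W × Q)

/-- A strategy of Eve in the letter game. -/
abbrev LStrat (α Q W : Type) := List (LRound α Q W) → α → W × Q

/-- A play of the letter game is consistent with Eve's strategy `s`. -/
def LConsistent (s : LStrat α Q W) (π : ℕ → LRound α Q W) : Prop :=
  ∀ n, (π n).2 = s ((List.range n).map π) (π n).1

/-- `s` is winning for Eve in the letter game with winning condition `good`
(a predicate of the word and Eve's weight sequence). -/
def LetterWinning (good : (ℕ → α) → (ℕ → W) → Prop) (s : LStrat α Q W) : Prop :=
  ∀ π : ℕ → LRound α Q W, LConsistent s π →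
    A.RunOn (fun n => (π n).1) (fun n => (π n).2) ∧
      good (fun n => (π n).1) (fun n => ((π n).2).1)

/-- `s` witnesses history-determinism: it wins the letter game, where Eve wins a
play iff the value of her run is at least the value of the word. -/
def HDWinning (Val : (ℕ → W) → ℝ) (s : LStrat α Q W) : Prop :=
  A.LetterWinning (fun w ve => A.wordVal Val w ≤ Val ve) s

/-- `A` is history-deterministic for value function `Val`: Eve wins the letter game. -/
def HD (Val : (ℕ → W) → ℝ) : Prop := ∃ s, A.HDWinning Val s

/-- A round of the `k`-runs letter game: a letter and Eve's `k` transitions. -/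
abbrev KRound (α Q W : Type) (k : ℕ) := α × (Fin k → W × Q)

/-- `A` is `k`-history-deterministic: Eve wins the `k`-runs letter game, in which
she moves `k` tokens and wins if the maximum of her runs' values equals the
value of the word. -/
noncomputable def kHD (k : ℕ) (Val : (ℕ → W) → ℝ) : Prop :=
  ∃ s : List (KRound α Q W k) → α → Fin k → W × Q,
    ∀ π : ℕ → KRound α Q W k,
      (∀ n, (π n).2 = s ((List.range n).map π) (π n).1) →
      (∀ j, A.RunOn (fun n => (π n).1) (fun n => (π n).2 j)) ∧
        (⨆ j, Val (fun n => ((π n).2 j).1)) = A.wordVal Val (fun n => (π n).1)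

/-- `h` is a legal finite run prefix of `A` from state `q`. -/
def FinRun (A : QAut α Q W) : Q → List (LRound α Q W) → Prop
  | _, [] => True
  | q, (a, xq) :: t => (q, a, xq.1, xq.2) ∈ A.trans ∧ FinRun A xq.2 t

/-- The state at the end of a finite run prefix starting from `q`. -/
def endSt : Q → List (LRound α Q W) → Q
  | q, [] => q
  | _, (_, xq) :: t => endSt xq.2 t

/-- The infinite weight sequence obtained by following the finite prefix `pre`
and then the infinite sequence `f`. -/
def splice (pre : List W) (f : ℕ → W) : ℕ → W := fun n =>
  if h : n < pre.length then pre.get ⟨n, h⟩ else f (n - pre.length)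

/-- The move `t` of Eve, on letter `σ` after history `h`, is non-cautious:
there is a continuation word `u` (starting with `σ`) and a run `π'` on it from the
current state whose value (together with the prefix) strictly exceeds the value of
every run on `u` starting with `t`. -/
def NonCautious (Val : (ℕ → W) → ℝ) (h : List (LRound α Q W)) (σ : α) (t : W × Q) : Prop :=
  ∃ u : ℕ → α, u 0 = σ ∧ ∃ π', A.RunFrom (endSt A.init h) u π' ∧
    ∀ π, A.RunFrom (endSt A.init h) u π → π 0 = t →
      Val (splice (h.map (fun r => r.2.1)) (fun n => (π n).1)) <
        Val (splice (h.map (fun r => r.2.1)) (fun n => (π' n).1))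

/-- A finite history is consistent with Eve's letter-game strategy `s`. -/
def HistConsistent (s : LStrat α Q W) (h : List (LRound α Q W)) : Prop :=
  ∀ n (hn : n < h.length), (h.get ⟨n, hn⟩).2 = s (h.take n) (h.get ⟨n, hn⟩).1

/-- Eve's letter-game strategy `s` is cautious: it never makes a non-cautious move
(along histories that arise when playing `s`). -/
def Cautious (Val : (ℕ → W) → ℝ) (s : LStrat α Q W) : Prop :=
  ∀ h, A.FinRun A.init h → HistConsistent s h →
    ∀ σ, ¬ A.NonCautious Val h σ (s h σ)

end QAut

/-- The letter-game strategy induced by a 1-token game strategy `s`: Eve plays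
as `s` would, assuming Adam plays a copycat strategy (moving his token exactly
as Eve's). -/
def inducedLetterStrat {α Q W : Type} (s : QAut.GkStrat α Q W 1) :
    QAut.LStrat α Q W :=
  fun h a => s (h.map fun r => (r.1, r.2, fun _ => r.2)) a

section Aux

variable {α Q W : Type} (A : QAut α Q W)

/-- Embed a letter-game round as a 1-token-game round (copycat Adam). -/
def cEmbed (r : QAut.LRound α Q W) : QAut.GkRound α Q W 1 :=
  (r.1, r.2, fun _ => r.2)

/-- The round played at step `n` given the history `hist`, when Eve plays `s`,
the history prefix is `h`, then Adam plays word `u` and copies until `h` ends,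
after which his token follows `π'`. -/
def cStep (s : QAut.GkStrat α Q W 1) (h : List (QAut.LRound α Q W)) (u : ℕ → α)
    (π' : ℕ → W × Q) (n : ℕ) (hist : List (QAut.GkRound α Q W 1)) :
    QAut.GkRound α Q W 1 :=
  if hn : n < h.length then cEmbed (h.get ⟨n, hn⟩)
  else (u (n - h.length), s hist (u (n - h.length)), fun _ => π' (n - h.length))

/-- The list of the first `n` rounds of the constructed play. -/
def cPlays (s : QAut.GkStrat α Q W 1) (h : List (QAut.LRound α Q W)) (u : ℕ → α)
    (π' : ℕ → W × Q) : ℕ → List (QAut.GkRound α Q W 1)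
  | 0 => []
  | n + 1 => cPlays s h u π' n ++ [cStep s h u π' n (cPlays s h u π' n)]

/-- The constructed play. -/
def cPlay (s : QAut.GkStrat α Q W 1) (h : List (QAut.LRound α Q W)) (u : ℕ → α)
    (π' : ℕ → W × Q) (n : ℕ) : QAut.GkRound α Q W 1 :=
  cStep s h u π' n (cPlays s h u π' n)

lemma cPlays_eq (s : QAut.GkStrat α Q W 1) (h : List (QAut.LRound α Q W)) (u : ℕ → α)
    (π' : ℕ → W × Q) (n : ℕ) :
    cPlays s h u π' n = (List.range n).map (cPlay s h u π') := by
  induction n with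
  | zero => simp [cPlays]
  | succ n ih => simp [cPlays, List.range_succ, ih, cPlay]

lemma cPlays_prefix (s : QAut.GkStrat α Q W 1) (h : List (QAut.LRound α Q W)) (u : ℕ → α)
    (π' : ℕ → W × Q) : ∀ n, n ≤ h.length →
    cPlays s h u π' n = (h.take n).map cEmbed := by
  intro n
  induction n with
  | zero => simp [cPlays]
  | succ n ih =>
    intro hn
    have hn' : n < h.length := hn
    rw [cPlays, ih (le_of_lt hn'), cStep, dif_pos hn', List.take_succ,
      List.getElem?_eq_getElem hn', List.map_append]
    simp [List.get_eq_getElem]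

lemma endSt_take_succ (q : Q) : ∀ (h : List (QAut.LRound α Q W)) (n : ℕ)
    (hn : n < h.length),
    QAut.endSt q (h.take (n + 1)) = (h.get ⟨n, hn⟩).2.2 := by
  intro h
  induction h generalizing q with
  | nil => simp
  | cons r t ih =>
    intro n hn
    cases n with
    | zero => simp [QAut.endSt]
    | succ m =>
      have hm : m < t.length := by simpa using hn
      simpa [QAut.endSt] using ih r.2.2 m hm

lemma finRun_step (q : Q) : ∀ (h : List (QAut.LRound α Q W)), A.FinRun q h →
    ∀ n (hn : n < h.length),
    (QAut.endSt q (h.take n), (h.get ⟨n, hn⟩).1, (h.get ⟨n, hn⟩).2.1,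
      (h.get ⟨n, hn⟩).2.2) ∈ A.trans := by
  intro h
  induction h generalizing q with
  | nil => simp
  | cons r t ih =>
    intro hr n hn
    obtain ⟨a, xq⟩ := r
    cases n with
    | zero => simpa [QAut.endSt] using hr.1
    | succ m =>
      have hm : m < t.length := by simpa using hn
      simpa [QAut.endSt] using ih xq.2 hr.2 m hm

end Aux

/-- If Eve plays a winning strategy in the 1-token game `G_1(A)`,
then against every copycat strategy of Adam she never makes a non-cautious
move; consequently a winning strategy for Eve in `G_1(A)` induces a cautious
strategy for Eve in the letter game on `A`. -/
theorem g1_winning_induces_cautious {α Q W : Type} (A : QAut α Q W)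
    (Val : (ℕ → W) → ℝ) (s : QAut.GkStrat α Q W 1)
    (hs : A.GkWinning 1 (QAut.goodVal Val) s) :
    A.Cautious Val (inducedLetterStrat s) := by
  intro h hFin hCons σ hNC
  obtain ⟨u, hu0, π', hπ', hlt⟩ := hNC
  set L := h.length with hL
  set π : ℕ → QAut.GkRound α Q W 1 := cPlay s h u π' with hπdef
  -- basic facts about the constructed play
  have hplays : ∀ n, cPlays s h u π' n = (List.range n).map π := fun n =>
    cPlays_eq s h u π' n
  have hlt_step : ∀ n (hn : n < L), π n = cEmbed (h.get ⟨n, hn⟩) := by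
    intro n hn
    simp [hπdef, cPlay, cStep, dif_pos hn, show n < h.length from hn]
  have hge_step : ∀ n, L ≤ n →
      π n = (u (n - L), s (cPlays s h u π' n) (u (n - L)), fun _ => π' (n - L)) := by
    intro n hn
    have : ¬ n < L := not_lt.mpr hn
    simp [hπdef, cPlay, cStep, dif_neg this, hL, show ¬ n < h.length from this]
  -- consistency of the play with s
  have hconsis : QAut.GkConsistent s π := by
    intro n
    rw [← hplays]
    rcases lt_or_ge n L with hn | hn
    · rw [hlt_step n hn, cPlays_prefix s h u π' n (le_of_lt hn)]
      have := hCons n hn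
      exact this
    · rw [hge_step n hn]
  -- Adam's and Eve's weight/state sequences
  have hA_tr : ∀ n (j : Fin 1), (π n).2.2 j =
      if hn : n < L then (h.get ⟨n, hn⟩).2 else π' (n - L) := by
    intro n j
    rcases lt_or_ge n L with hn | hn
    · rw [hlt_step n hn]; simp [cEmbed, dif_pos hn]
    · rw [hge_step n hn]; simp [dif_neg (not_lt.mpr hn)]
  have hletter : ∀ n, (π n).1 = if hn : n < L then (h.get ⟨n, hn⟩).1 else u (n - L) := by
    intro n
    rcases lt_or_ge n L with hn | hn
    · rw [hlt_step n hn]; simp [cEmbed, dif_pos hn]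
    · rw [hge_step n hn]; simp [dif_neg (not_lt.mpr hn)]
  -- prefix states for any token that copies h on the prefix
  have hstate1 : ∀ (τ : ℕ → W × Q),
      (∀ m (hm : m < L), τ m = (h.get ⟨m, hm⟩).2) →
      ∀ n, n ≤ L → QAut.stateAt A.init τ n = QAut.endSt A.init (h.take n) := by
    intro τ hτ n hn
    cases n with
    | zero => simp [QAut.stateAt, QAut.endSt]
    | succ m =>
      have hm : m < L := hn
      rw [QAut.stateAt, hτ m hm, endSt_take_succ]
  -- Adam's token traces a legal run
  have hAdam : ∀ j : Fin 1, A.RunOn (fun n => (π n).1) (fun n => (π n).2.2 j) := by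
    intro j n
    have hst1 := hstate1 (fun n => (π n).2.2 j)
      (fun m hm => by show (π m).2.2 j = _; rw [hA_tr m j, dif_pos hm])
    have hstate2 : ∀ m, QAut.stateAt A.init (fun n => (π n).2.2 j) (L + m) =
        QAut.stateAt (QAut.endSt A.init h) π' m := by
      intro m
      induction m with
      | zero =>
        have h0 := hst1 L le_rfl
        rw [List.take_length] at h0
        simpa [QAut.stateAt] using h0
      | succ m ih =>
        show ((π (L + m)).2.2 j).2 = (π' m).2
        rw [hA_tr (L + m) j, dif_neg (not_lt.mpr (Nat.le_add_right L m))]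
        simp
    show (QAut.stateAt A.init (fun n => (π n).2.2 j) n, (π n).1,
      ((π n).2.2 j).1, ((π n).2.2 j).2) ∈ A.trans
    rcases lt_or_ge n L with hn | hn
    · rw [hst1 n (le_of_lt hn), hletter n, hA_tr n j]
      simp only [dif_pos hn]
      exact finRun_step A A.init h hFin n hn
    · obtain ⟨m, rfl⟩ : ∃ m, n = L + m := ⟨n - L, by omega⟩
      rw [hstate2 m, hletter (L + m), hA_tr (L + m) j]
      simp only [dif_neg (not_lt.mpr (Nat.le_add_right L m)), Nat.add_sub_cancel_left]
      exact hπ' m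
  obtain ⟨hEve, hgood⟩ := hs π hconsis hAdam
  -- Eve's weights on the prefix
  have hE_tr : ∀ m (hm : m < L), (π m).2.1 = (h.get ⟨m, hm⟩).2 := by
    intro m hm
    rw [hlt_step m hm]
    rfl
  -- Eve's tail run
  set πE : ℕ → W × Q := fun m => (π (L + m)).2.1 with hπE
  have hstE1 := hstate1 (fun n => (π n).2.1) hE_tr
  have hstE2 : ∀ m, QAut.stateAt A.init (fun n => (π n).2.1) (L + m) =
      QAut.stateAt (QAut.endSt A.init h) πE m := by
    intro m
    induction m with
    | zero =>
      have h0 := hstE1 L le_rfl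
      rw [List.take_length] at h0
      simpa [QAut.stateAt] using h0
    | succ m ih =>
      show ((π (L + m)).2.1).2 = (πE m).2
      rfl
  have hRunE : A.RunFrom (QAut.endSt A.init h) u πE := by
    intro m
    have h1 := hEve (L + m)
    have hw : (π (L + m)).1 = u m := by
      rw [hletter (L + m), dif_neg (not_lt.mpr (Nat.le_add_right L m))]
      simp
    show (QAut.stateAt (QAut.endSt A.init h) πE m, u m, (πE m).1, (πE m).2) ∈ A.trans
    rw [← hstE2 m, ← hw]
    exact h1
  have hπE0 : πE 0 = inducedLetterStrat s h σ := by
    show (π (L + 0)).2.1 = _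
    rw [Nat.add_zero, hge_step L le_rfl, cPlays_prefix s h u π' L le_rfl]
    show s ((h.take L).map cEmbed) (u (L - L)) = _
    rw [hL, List.take_length, Nat.sub_self, hu0]
    rfl
  have hkey := hlt πE hRunE hπE0
  -- identify the spliced sequences with the play's weight sequences
  have hprelen : (h.map (fun r => r.2.1)).length = L := by simp [hL]
  have eqE : QAut.splice (h.map (fun r => r.2.1)) (fun n => (πE n).1) =
      fun n => ((π n).2.1).1 := by
    funext n
    rw [QAut.splice]
    rcases lt_or_ge n L with hn | hn
    · rw [dif_pos (by simpa [hprelen] using hn)]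
      simp [hE_tr n hn]
    · rw [dif_neg (by simp [hprelen]; omega)]
      have : L + (n - (h.map (fun r => r.2.1)).length) = n := by
        rw [hprelen]; omega
      simp only [hπE, this]
  have eqA : QAut.splice (h.map (fun r => r.2.1)) (fun n => (π' n).1) =
      fun n => ((π n).2.2 0).1 := by
    funext n
    rw [QAut.splice]
    rcases lt_or_ge n L with hn | hn
    · rw [dif_pos (by simpa [hprelen] using hn)]
      simp [hA_tr n 0, dif_pos hn]
    · rw [dif_neg (by simp [hprelen]; omega)]
      rw [hA_tr n 0, dif_neg (not_lt.mpr hn), hprelen]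
  rw [eqE, eqA] at hkey
  have := hgood 0
  exact absurd this (not_le.mpr hkey)
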